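/- Let E, V₁, V₂ be real normed vector spaces, let β : E → (E →L ℝ) assign to each point of E a continuous linear functional (a 1-form on E), let t ∈ ℝ, and let F₁ : E × V₁ → ℝ and F₂ : E × V₂ → ℝ be differentiable. Define the t-difference function Δ : E × V₁ × V₂ → ℝ by Δ(x, ξ₁, ξ₂) = F₂(x, ξ₂) − e^t · F₁(x, ξ₁), and let β̃ denote the pullback 1-form on E × V₁ × V₂ given by β̃(x,ξ₁,ξ₂)(u, v₁, v₂) = β(x)(u). Then a point (x, ξ₁, ξ₂) satisfies DΔ(x,ξ₁,ξ₂) = Δ(x,ξ₁,ξ₂) • β̃(x,ξ₁,ξ₂) (i.e., it is a β-critical point of Δ) if and only if the following three conditions hold: (1) the partial derivative of F₁ at (x, ξ₁) in the V₁-directions vanishes; (2) the partial derivative of F₂ at (x, ξ₂) in the V₂-directions vanishes; and (3) D_x F₂(x, ξ₂) − F₂(x, ξ₂) • β(x) = e^t • (D_x F₁(x, ξ₁) − F₁(x, ξ₁) • β(x)) as continuous linear functionals on E, where D_x denotes the partial derivative in the E-directions. -/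

import Mathlib

/-- Let `E, V₁, V₂` be real normed vector spaces, `β` a 1-form on `E`,
`t ∈ ℝ`, and `F₁ : E × V₁ → ℝ`, `F₂ : E × V₂ → ℝ` differentiable.  Let
`Δ (x, ξ₁, ξ₂) = F₂ (x, ξ₂) − e^t · F₁ (x, ξ₁)` be the `t`-difference function and `β̃`
the pullback of `β` to `E × V₁ × V₂`.  Then `(x, ξ₁, ξ₂)` is a `β`-critical point of
`Δ` (i.e. `DΔ = Δ • β̃` there) iff the fiber derivatives of `F₁` at `(x, ξ₁)` and of
`F₂` at `(x, ξ₂)` vanish and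
`D_x F₂(x,ξ₂) − F₂(x,ξ₂) • β x = e^t • (D_x F₁(x,ξ₁) − F₁(x,ξ₁) • β x)`. -/
theorem stmt4 {E V₁ V₂ : Type} [NormedAddCommGroup E] [NormedSpace ℝ E]
    [NormedAddCommGroup V₁] [NormedSpace ℝ V₁]
    [NormedAddCommGroup V₂] [NormedSpace ℝ V₂]
    (β : E → (E →L[ℝ] ℝ)) (t : ℝ)
    (F₁ : E × V₁ → ℝ) (F₂ : E × V₂ → ℝ)
    (hF₁ : Differentiable ℝ F₁) (hF₂ : Differentiable ℝ F₂)
    (Δ : E × V₁ × V₂ → ℝ)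
    (hΔ : ∀ p : E × V₁ × V₂, Δ p = F₂ (p.1, p.2.2) - Real.exp t * F₁ (p.1, p.2.1))
    (x : E) (ξ₁ : V₁) (ξ₂ : V₂) :
    fderiv ℝ Δ (x, ξ₁, ξ₂)
        = Δ (x, ξ₁, ξ₂) • ((β x).comp (ContinuousLinearMap.fst ℝ E (V₁ × V₂))) ↔
      (fderiv ℝ (fun ξ : V₁ => F₁ (x, ξ)) ξ₁ = 0 ∧
       fderiv ℝ (fun ξ : V₂ => F₂ (x, ξ)) ξ₂ = 0 ∧
       fderiv ℝ (fun y : E => F₂ (y, ξ₂)) x - F₂ (x, ξ₂) • β x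
         = Real.exp t • (fderiv ℝ (fun y : E => F₁ (y, ξ₁)) x - F₁ (x, ξ₁) • β x)) := by
  classical
  set D₁ := fderiv ℝ F₁ (x, ξ₁) with hD₁def
  set D₂ := fderiv ℝ F₂ (x, ξ₂) with hD₂def
  -- partial derivatives
  have hA : HasFDerivAt (fun y : E => F₂ (y, ξ₂))
      (D₂.comp (ContinuousLinearMap.inl ℝ E V₂)) x :=
    (hF₂ (x, ξ₂)).hasFDerivAt.comp x (hasFDerivAt_prodMk_left x ξ₂)
  have hB : HasFDerivAt (fun ξ : V₂ => F₂ (x, ξ))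
      (D₂.comp (ContinuousLinearMap.inr ℝ E V₂)) ξ₂ :=
    (hF₂ (x, ξ₂)).hasFDerivAt.comp ξ₂ (hasFDerivAt_prodMk_right x ξ₂)
  have hC : HasFDerivAt (fun y : E => F₁ (y, ξ₁))
      (D₁.comp (ContinuousLinearMap.inl ℝ E V₁)) x :=
    (hF₁ (x, ξ₁)).hasFDerivAt.comp x (hasFDerivAt_prodMk_left x ξ₁)
  have hD : HasFDerivAt (fun ξ : V₁ => F₁ (x, ξ))
      (D₁.comp (ContinuousLinearMap.inr ℝ E V₁)) ξ₁ :=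
    (hF₁ (x, ξ₁)).hasFDerivAt.comp ξ₁ (hasFDerivAt_prodMk_right x ξ₁)
  -- derivative of Δ
  set L₁ : (E × V₁ × V₂) →L[ℝ] (E × V₁) :=
    (ContinuousLinearMap.fst ℝ E (V₁ × V₂)).prod
      ((ContinuousLinearMap.fst ℝ V₁ V₂).comp (ContinuousLinearMap.snd ℝ E (V₁ × V₂))) with hL₁
  set L₂ : (E × V₁ × V₂) →L[ℝ] (E × V₂) :=
    (ContinuousLinearMap.fst ℝ E (V₁ × V₂)).prod
      ((ContinuousLinearMap.snd ℝ V₁ V₂).comp (ContinuousLinearMap.snd ℝ E (V₁ × V₂))) with hL₂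
  have hΔfun : Δ = fun p : E × V₁ × V₂ => F₂ (L₂ p) - Real.exp t * F₁ (L₁ p) := by
    funext p; rw [hΔ p]; rfl
  have hΔ' : HasFDerivAt Δ
      (D₂.comp L₂ - Real.exp t • (D₁.comp L₁)) (x, ξ₁, ξ₂) := by
    rw [hΔfun]
    have h2 : HasFDerivAt (fun p : E × V₁ × V₂ => F₂ (L₂ p)) (D₂.comp L₂) (x, ξ₁, ξ₂) := by
      have := (hF₂ (L₂ (x, ξ₁, ξ₂))).hasFDerivAt.comp (x, ξ₁, ξ₂) (L₂.hasFDerivAt)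
      exact this
    have h1 : HasFDerivAt (fun p : E × V₁ × V₂ => F₁ (L₁ p)) (D₁.comp L₁) (x, ξ₁, ξ₂) := by
      have := (hF₁ (L₁ (x, ξ₁, ξ₂))).hasFDerivAt.comp (x, ξ₁, ξ₂) (L₁.hasFDerivAt)
      exact this
    exact h2.sub (h1.const_mul (Real.exp t))
  rw [hΔ'.fderiv, hA.fderiv, hB.fderiv, hC.fderiv, hD.fderiv, hΔ (x, ξ₁, ξ₂)]
  simp only [ContinuousLinearMap.ext_iff, ContinuousLinearMap.sub_apply,
    ContinuousLinearMap.smul_apply, ContinuousLinearMap.comp_apply,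
    ContinuousLinearMap.prod_apply, ContinuousLinearMap.coe_fst',
    ContinuousLinearMap.coe_snd', ContinuousLinearMap.inl_apply,
    ContinuousLinearMap.inr_apply, ContinuousLinearMap.zero_apply, smul_eq_mul, hL₁, hL₂]
  have hexp : Real.exp t ≠ 0 := Real.exp_ne_zero t
  constructor
  · intro h
    refine ⟨fun v => ?_, fun v => ?_, fun u => ?_⟩
    · have := h (0, v, 0)
      simp only [map_zero] at this
      have h0 : D₂ ((0 : E), (0 : V₂)) = 0 := by
        rw [show ((0:E), (0:V₂)) = (0 : E × V₂) from rfl]; exact D₂.map_zero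
      rw [show ((0:E), (0:V₂)) = (0 : E × V₂) from rfl] at h0
      have : Real.exp t * D₁ (0, v) = 0 := by
        have hβ0 : (β x) (0 : E) = 0 := map_zero _
        simp only [hβ0, mul_zero] at this
        have hD₂0 : D₂ ((0:E), (0:V₂)) = 0 := h0
        rw [hD₂0] at this
        linarith
      exact (mul_eq_zero.mp this).resolve_left hexp
    · have := h (0, 0, v)
      have hβ0 : (β x) (0 : E) = 0 := map_zero _
      have hD₁0 : D₁ ((0:E), (0:V₁)) = 0 := by
        rw [show ((0:E), (0:V₁)) = (0 : E × V₁) from rfl]; exact D₁.map_zero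
      simp only [hβ0, mul_zero, hD₁0] at this
      linarith
    · have := h (u, 0, 0)
      have hD₂0 : D₂ ((u:E), (0:V₂)) - F₂ (x, ξ₂) * β x u
          = Real.exp t * (D₁ (u, (0:V₁)) - F₁ (x, ξ₁) * β x u) := by
        ring_nf
        ring_nf at this
        linarith
      linarith [hD₂0]
  · rintro ⟨h₁, h₂, h₃⟩ w
    obtain ⟨u, v₁, v₂⟩ := w
    have e₂ : D₂ (u, v₂) = D₂ (u, 0) + D₂ (0, v₂) := by
      rw [← D₂.map_add]; norm_num
    have e₁ : D₁ (u, v₁) = D₁ (u, 0) + D₁ (0, v₁) := by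
      rw [← D₁.map_add]; norm_num
    rw [e₂, e₁, h₁ v₁, h₂ v₂]
    have := h₃ u
    ring_nf
    ring_nf at this
    linarith
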